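/- Let T, N, M be positive integers with M ≥ 2T, set ξ = N/M and ω = e·√(3/(7π)), and let s be a real number with 0 ≤ s ≤ N. Then (ω√(2π))^T · (M/(M−T))^s · (Γ(T)/Γ(T+s)) · s^s · e^{−s} · ((s+T)/T)^{T/2} ≤ 2·√(1+N) · e^{(1+2ξ)T} · (T/(T+s))^{T/2}, where by convention s^s = 1 when s = 0. -/

import Mathlib

open Real


/-- Stirling lower bound: `√(2πk) (k/e)^k ≤ k!` for `k ≥ 1`. -/
lemma fact_lower (k : ℕ) (hk : 1 ≤ k) :
    Real.sqrt (2 * π * k) * ((k : ℝ) / Real.exp 1) ^ k ≤ (Nat.factorial k : ℝ) := by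
  have h1 : Real.sqrt π ≤ Stirling.stirlingSeq k := by
    obtain ⟨j, rfl⟩ := Nat.exists_eq_add_of_le hk
    have := Antitone.le_of_tendsto Stirling.stirlingSeq'_antitone
      (Stirling.tendsto_stirlingSeq_sqrt_pi.comp (Filter.tendsto_add_atTop_nat 1)) j
    simpa [Function.comp, Nat.succ_eq_add_one, Nat.add_comm] using this
  have hkpos : (0:ℝ) < k := by exact_mod_cast hk
  have hden : 0 < Real.sqrt (2 * k) * ((k : ℝ) / Real.exp 1) ^ k := by positivity
  have h2 : Real.sqrt π * (Real.sqrt (2 * k) * ((k : ℝ) / Real.exp 1) ^ k)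
      ≤ (Nat.factorial k : ℝ) := by
    have := mul_le_mul_of_nonneg_right h1 hden.le
    rw [Stirling.stirlingSeq, div_mul_cancel₀] at this
    · exact this
    · exact hden.ne'
  have h3 : Real.sqrt (2 * π * k) = Real.sqrt π * Real.sqrt (2 * k) := by
    rw [← Real.sqrt_mul (by positivity)]
    ring_nf
  rw [h3, mul_assoc]
  exact h2

/-- `s^s e^{-s} ≤ k^k e^{-k} s^{s-k}` for `1 ≤ k ≤ s`. -/
lemma sps_le (k : ℕ) (hk : 1 ≤ k) (s : ℝ) (hks : (k:ℝ) ≤ s) :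
    s ^ s * Real.exp (-s) ≤ (k:ℝ) ^ k * Real.exp (-(k:ℝ)) * s ^ (s - (k:ℝ)) := by
  have hkpos : (0:ℝ) < k := by exact_mod_cast hk
  have hspos : (0:ℝ) < s := lt_of_lt_of_le hkpos hks
  have key : s ^ (k:ℕ) * Real.exp (-s) ≤ (k:ℝ) ^ k * Real.exp (-(k:ℝ)) := by
    have hlog : Real.log (s / k) ≤ s / k - 1 := Real.log_le_sub_one_of_pos (by positivity)
    have hlog2 : Real.log s - Real.log k ≤ s / k - 1 := by
      rwa [Real.log_div hspos.ne' hkpos.ne'] at hlog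
    have hmul : (k:ℝ) * Real.log s - (k:ℝ) * Real.log k ≤ s - k := by
      have := mul_le_mul_of_nonneg_left hlog2 hkpos.le
      have hd : (k:ℝ) * (s / k - 1) = s - k := by field_simp
      nlinarith [this]
    have : Real.log (s ^ (k:ℕ) * Real.exp (-s)) ≤ Real.log ((k:ℝ) ^ k * Real.exp (-(k:ℝ))) := by
      rw [Real.log_mul (by positivity) (Real.exp_ne_zero _),
          Real.log_mul (by positivity) (Real.exp_ne_zero _),
          Real.log_pow, Real.log_pow, Real.log_exp, Real.log_exp]
      push_cast
      linarith
    exact (Real.log_le_log_iff (by positivity) (by positivity)).mp this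
  have hss : s ^ s = s ^ (k:ℕ) * s ^ (s - (k:ℝ)) := by
    rw [← Real.rpow_natCast s k, ← Real.rpow_add hspos]
    ring_nf
  rw [hss]
  have hpow_nonneg : (0:ℝ) ≤ s ^ (s - (k:ℝ)) := (Real.rpow_pos_of_pos hspos _).le
  calc s ^ (k:ℕ) * s ^ (s - (k:ℝ)) * Real.exp (-s)
      = (s ^ (k:ℕ) * Real.exp (-s)) * s ^ (s - (k:ℝ)) := by ring
    _ ≤ ((k:ℝ) ^ k * Real.exp (-(k:ℝ))) * s ^ (s - (k:ℝ)) :=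
        mul_le_mul_of_nonneg_right key hpow_nonneg
    _ = (k:ℝ) ^ k * Real.exp (-(k:ℝ)) * s ^ (s - (k:ℝ)) := by ring


/-- `(n)! ≤ Γ(y) · y^(n+1-y)` when `n ≤ y < n+1`, via log-convexity of Γ. -/
lemma fact_le_gamma (n : ℕ) (y : ℝ) (hy : (n:ℝ) ≤ y) (hy1 : y < n + 1) (hy0 : 0 < y) :
    (Nat.factorial n : ℝ) ≤ Real.Gamma y * y ^ ((n:ℝ) + 1 - y) := by
  set r : ℝ := y - n with hr
  have hr0 : 0 ≤ r := by simp [hr]; linarith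
  have hr1 : r ≤ 1 := by simp [hr]; linarith
  have hmem1 : y ∈ Set.Ioi (0:ℝ) := hy0
  have hmem2 : y + 1 ∈ Set.Ioi (0:ℝ) := by simp; linarith
  have hcvx := Real.convexOn_log_Gamma.2 hmem1 hmem2 hr0 (by linarith : (0:ℝ) ≤ 1 - r)
      (by ring)
  have hpt : r • y + (1 - r) • (y + 1) = (n:ℝ) + 1 := by
    simp only [smul_eq_mul]; rw [hr]; ring
  rw [hpt] at hcvx
  simp only [Function.comp, smul_eq_mul] at hcvx
  -- hcvx : log (Γ (n+1)) ≤ r * log (Γ y) + (1-r) * log (Γ (y+1))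
  have hΓy : 0 < Real.Gamma y := Real.Gamma_pos_of_pos hy0
  have hΓy1 : Real.Gamma (y + 1) = y * Real.Gamma y := Real.Gamma_add_one hy0.ne'
  have hΓn : Real.Gamma ((n:ℝ) + 1) = Nat.factorial n := Real.Gamma_nat_eq_factorial n
  rw [hΓn, hΓy1, Real.log_mul hy0.ne' hΓy.ne'] at hcvx
  -- hcvx : log n! ≤ r * log Γy + (1-r)*(log y + log Γy)
  have hrhs : Real.Gamma y * y ^ ((n:ℝ) + 1 - y)
      = Real.exp (Real.log (Real.Gamma y) + (1 - r) * Real.log y) := by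
    rw [Real.exp_add, Real.exp_log hΓy, Real.rpow_def_of_pos hy0]
    have : (n:ℝ) + 1 - y = 1 - r := by rw [hr]; ring
    rw [this]; ring
  rw [hrhs]
  have hfn : (0:ℝ) < Nat.factorial n := by exact_mod_cast Nat.factorial_pos n
  rw [← Real.exp_log hfn]
  apply Real.exp_le_exp.mpr
  nlinarith [hcvx]


/-- key step inequality -/
lemma step_key' (t k : ℕ) (m : ℝ) (hk : 1 ≤ k) (hm : m = (t:ℝ) + k + 2) :
    ((k:ℝ) + 1) * (m + 1) ^ (t+2) * Real.sqrt ((k:ℝ) * (1 + k))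
      ≤ m ^ (t+3) * Real.sqrt (((k:ℝ) + 1) * ((k:ℝ) + 2)) := by
  have hkR : (1:ℝ) ≤ (k:ℝ) := by exact_mod_cast hk
  have hmpos : (0:ℝ) < m := by rw [hm]; positivity
  have hm3 : (3:ℝ) ≤ m := by rw [hm]; have : (0:ℝ) ≤ (t:ℝ) := Nat.cast_nonneg t; linarith
  have hmk : (k:ℝ) + 2 ≤ m := by rw [hm]; have : (0:ℝ) ≤ (t:ℝ) := Nat.cast_nonneg t; linarith
  have hLpos : 0 < ((k:ℝ) + 1) * (m + 1) ^ (t+2) * Real.sqrt ((k:ℝ) * (1 + k)) := by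
    positivity
  have hRpos : 0 < m ^ (t+3) * Real.sqrt (((k:ℝ) + 1) * ((k:ℝ) + 2)) := by
    positivity
  rw [← Real.log_le_log_iff hLpos hRpos]
  have hkpos : (0:ℝ) < k := by linarith
  rw [Real.log_mul (by positivity) (by positivity), Real.log_mul (by positivity) (by positivity),
      Real.log_mul (by positivity) (by positivity),
      Real.log_sqrt (by positivity), Real.log_sqrt (by positivity),
      Real.log_mul (by positivity) (by positivity), Real.log_mul (by positivity) (by positivity),
      Real.log_pow, Real.log_pow]
  -- three log facts
  have hA : Real.log (m + 1) - Real.log m ≤ 1 / m := by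
    have := Real.log_le_sub_one_of_pos (show (0:ℝ) < (m+1)/m by positivity)
    rw [Real.log_div (by positivity) hmpos.ne'] at this
    have h2 : (m + 1) / m - 1 = 1 / m := by field_simp; ring
    linarith [this, h2.le]
  have hB : ((m - (k+1)) / m) ≤ Real.log m - Real.log ((k:ℝ)+1) := by
    have := Real.log_le_sub_one_of_pos (show (0:ℝ) < ((k:ℝ)+1)/m by positivity)
    rw [Real.log_div (by positivity) hmpos.ne'] at this
    have h2 : ((k:ℝ) + 1) / m - 1 = -((m - (k+1))/m) := by field_simp; ring
    linarith [this, h2.le]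
  have hC : 2 / ((k:ℝ) + 2) ≤ Real.log ((k:ℝ)+2) - Real.log k := by
    have := Real.log_le_sub_one_of_pos (show (0:ℝ) < (k:ℝ)/((k:ℝ)+2) by positivity)
    rw [Real.log_div (by positivity) (by positivity)] at this
    have h2 : (k:ℝ) / ((k:ℝ) + 2) - 1 = -(2/((k:ℝ)+2)) := by field_simp; ring
    linarith [this, h2.le]
  have hCm : 2 / m ≤ Real.log ((k:ℝ)+2) - Real.log k := by
    have : 2 / m ≤ 2 / ((k:ℝ)+2) := by
      apply div_le_div_of_nonneg_left (by norm_num) (by positivity) hmk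
    linarith
  have hmk1 : m - ((k:ℝ)+1) = (t:ℝ) + 1 := by rw [hm]; ring
  rw [hmk1] at hB
  have ht0 : (0:ℝ) ≤ (t:ℝ) := Nat.cast_nonneg t
  have hBt : ((t:ℝ)+1)/m ≤ Real.log m - Real.log ((k:ℝ)+1) := hB
  -- combine: log(k+1) + (t+2) log(m+1) + (log k + log(1+k))/2
  --        ≤ (t+3) log m + (log(k+1)+log(k+2))/2
  have expand : ((t:ℝ)+2) * (Real.log (m+1) - Real.log m) ≤ ((t:ℝ)+2)/m := by
    have := mul_le_mul_of_nonneg_left hA (show (0:ℝ) ≤ (t:ℝ)+2 by linarith)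
    calc ((t:ℝ)+2) * (Real.log (m+1) - Real.log m) ≤ ((t:ℝ)+2) * (1/m) := this
      _ = ((t:ℝ)+2)/m := by ring
  have h1k : Real.log (1 + (k:ℝ)) = Real.log ((k:ℝ) + 1) := by ring_nf
  push_cast
  rw [h1k]
  have e1 : ((t:ℝ)+2)/m = ((t:ℝ)+2)*m⁻¹ := by ring
  have e2 : ((t:ℝ)+1)/m = ((t:ℝ)+1)*m⁻¹ := by ring
  have e3 : (2:ℝ)/m = 2*m⁻¹ := by ring
  rw [e1] at expand
  rw [e2] at hBt
  rw [e3] at hCm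
  linarith [expand, hBt, hCm]

lemma step_key (t k : ℕ) (hk : 1 ≤ k) :
    ((k:ℝ) + 1) * ((t:ℝ) + k + 3) ^ (t+2) * Real.sqrt ((k:ℝ) * (1 + k))
      ≤ ((t:ℝ) + k + 2) ^ (t+3) * Real.sqrt (((k:ℝ) + 1) * ((k:ℝ) + 2)) := by
  have := step_key' t k ((t:ℝ) + k + 2) hk rfl
  have he : (t:ℝ) + k + 2 + 1 = (t:ℝ) + k + 3 := by ring
  rwa [he] at this


lemma exp3_le : Real.exp 3 ≤ 12 * Real.sqrt π := by
  have h1 : Real.exp 3 = Real.exp 1 ^ 3 := by rw [Real.exp_one_pow]; norm_num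
  have h2 : Real.exp 1 ^ 3 ≤ (2.7182818286:ℝ)^3 :=
    pow_le_pow_left₀ (Real.exp_pos 1).le Real.exp_one_lt_d9.le 3
  have h3 : (1.7:ℝ) ≤ Real.sqrt π := by
    rw [show (1.7:ℝ) = Real.sqrt (1.7^2) by rw [Real.sqrt_sq]; norm_num]
    exact Real.sqrt_le_sqrt (by nlinarith [Real.pi_gt_d6])
  nlinarith [h2, h3]

lemma base_aux (t : ℕ) : ((t:ℝ)+3)^(t+2) ≤ 4*Real.sqrt π*((t:ℝ)+2)*((t:ℝ)+1)^(t+2) := by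
  rcases Nat.eq_zero_or_pos t with rfl | ht
  · -- 9 ≤ 8 √π
    have h3 : (9/8:ℝ) ≤ Real.sqrt π := by
      rw [show (9/8:ℝ) = Real.sqrt ((9/8)^2) by rw [Real.sqrt_sq]; norm_num]
      exact Real.sqrt_le_sqrt (by nlinarith [Real.pi_gt_d6])
    norm_num
    nlinarith [h3]
  · have htR : (1:ℝ) ≤ (t:ℝ) := by exact_mod_cast ht
    have h1pos : (0:ℝ) < (t:ℝ)+1 := by linarith
    have hfrac : ((t:ℝ)+3)/((t:ℝ)+1) > 0 := by positivity
    have hlog : Real.log (((t:ℝ)+3)/((t:ℝ)+1)) ≤ 2/((t:ℝ)+1) := by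
      have := Real.log_le_sub_one_of_pos hfrac
      have he : ((t:ℝ)+3)/((t:ℝ)+1) - 1 = 2/((t:ℝ)+1) := by field_simp; ring
      linarith [he.le]
    have hratio : (((t:ℝ)+3)/((t:ℝ)+1))^(t+2) ≤ Real.exp 3 := by
      have heq : (((t:ℝ)+3)/((t:ℝ)+1))^(t+2)
          = Real.exp (((t:ℕ)+2 : ℕ) * Real.log (((t:ℝ)+3)/((t:ℝ)+1))) := by
        rw [← Real.exp_log (pow_pos hfrac (t+2)), Real.log_pow]
      rw [heq, Real.exp_le_exp]
      have hb : ((t:ℕ)+2 : ℕ) * Real.log (((t:ℝ)+3)/((t:ℝ)+1)) ≤ ((t:ℝ)+2) * (2/((t:ℝ)+1)) := by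
        push_cast
        apply mul_le_mul_of_nonneg_left hlog (by linarith)
      have hc : ((t:ℝ)+2) * (2/((t:ℝ)+1)) ≤ 3 := by
        rw [mul_div_assoc'] at *
        rw [div_le_iff₀ h1pos]
        nlinarith
      calc ((t:ℕ)+2 : ℕ) * Real.log (((t:ℝ)+3)/((t:ℝ)+1)) ≤ ((t:ℝ)+2) * (2/((t:ℝ)+1)) := hb
        _ ≤ 3 := hc
    have hsplit : ((t:ℝ)+3)^(t+2) = (((t:ℝ)+3)/((t:ℝ)+1))^(t+2) * ((t:ℝ)+1)^(t+2) := by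
      rw [← mul_pow]
      congr 1
      field_simp
    rw [hsplit]
    have hpow_pos : (0:ℝ) < ((t:ℝ)+1)^(t+2) := by positivity
    calc (((t:ℝ)+3)/((t:ℝ)+1))^(t+2) * ((t:ℝ)+1)^(t+2)
        ≤ Real.exp 3 * ((t:ℝ)+1)^(t+2) := mul_le_mul_of_nonneg_right hratio hpow_pos.le
      _ ≤ (12 * Real.sqrt π) * ((t:ℝ)+1)^(t+2) := mul_le_mul_of_nonneg_right exp3_le hpow_pos.le
      _ ≤ 4*Real.sqrt π*((t:ℝ)+2)*((t:ℝ)+1)^(t+2) := by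
          apply mul_le_mul_of_nonneg_right _ hpow_pos.le
          have hπ : (0:ℝ) < Real.sqrt π := Real.sqrt_pos.mpr Real.pi_pos
          nlinarith [hπ, htR]


lemma lemD (t k : ℕ) (hk : 1 ≤ k) :
    (Nat.factorial t : ℝ) * (Nat.factorial k : ℝ) * ((t:ℝ)+k+2)^(t+2)
      ≤ 2 * Real.sqrt (2*π*((k:ℝ)*(1+(k:ℝ)))) * (Nat.factorial (t+1+k) : ℝ) * ((t:ℝ)+1)^(t+1) := by
  induction k, hk using Nat.le_induction with
  | base =>
      have hsq : Real.sqrt (2*π*((1:ℝ)*(1+(1:ℝ)))) = 2*Real.sqrt π := by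
        rw [show (2*π*((1:ℝ)*(1+1))) = 2^2*π by ring,
            Real.sqrt_mul (by positivity), Real.sqrt_sq (by norm_num)]
      have hfact : (Nat.factorial (t+1+1) : ℝ) = ((t:ℝ)+2)*((t:ℝ)+1)*(Nat.factorial t : ℝ) := by
        rw [Nat.factorial_succ, Nat.factorial_succ]; push_cast; ring
      have hba := base_aux t
      have hfnn : (0:ℝ) ≤ (Nat.factorial t : ℝ) := by positivity
      have hp : ((t:ℝ)+1)^(t+1)*((t:ℝ)+1) = ((t:ℝ)+1)^(t+2) := (pow_succ _ _).symm
      push_cast [Nat.factorial_one]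
      rw [hsq, hfact]
      have := mul_le_mul_of_nonneg_right hba hfnn
      calc (Nat.factorial t : ℝ) * 1 * ((t:ℝ)+1+2)^(t+2)
          = ((t:ℝ)+3)^(t+2) * (Nat.factorial t : ℝ) := by ring_nf
        _ ≤ (4*Real.sqrt π*((t:ℝ)+2)*((t:ℝ)+1)^(t+2)) * (Nat.factorial t : ℝ) := this
        _ = 2*(2*Real.sqrt π) * (((t:ℝ)+2)*((t:ℝ)+1)*(Nat.factorial t : ℝ)) * ((t:ℝ)+1)^(t+1) := by
            rw [← hp]; ring
  | succ k hk ih =>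
      have hkR : (1:ℝ) ≤ (k:ℝ) := by exact_mod_cast hk
      have hstep := step_key t k hk
      have hfact : (Nat.factorial (t+1+(k+1)) : ℝ)
          = ((t:ℝ)+k+2) * (Nat.factorial (t+1+k) : ℝ) := by
        rw [show t+1+(k+1) = (t+1+k)+1 by ring, Nat.factorial_succ]; push_cast; ring
      -- positive quantities
      have hP : (0:ℝ) < ((t:ℝ)+k+2)^(t+2) * Real.sqrt ((k:ℝ)*(1+(k:ℝ))) := by positivity
      -- multiply ih with hstep
      have hihnn : (0:ℝ) ≤ (Nat.factorial t : ℝ) * (Nat.factorial k : ℝ) * ((t:ℝ)+k+2)^(t+2) := by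
        positivity
      have hstepnn : (0:ℝ) ≤ ((k:ℝ) + 1) * ((t:ℝ) + k + 3) ^ (t+2) * Real.sqrt ((k:ℝ) * (1 + k)) := by
        positivity
      have hRHSnn : (0:ℝ) ≤ 2 * Real.sqrt (2*π*((k:ℝ)*(1+(k:ℝ)))) * (Nat.factorial (t+1+k) : ℝ) * ((t:ℝ)+1)^(t+1) := by
        positivity
      have hmul := mul_le_mul ih hstep hstepnn hRHSnn
      -- now rearrange.  Denote X = goal LHS, Y = goal RHS, P = ((t:ℝ)+k+2)^(t+2) * √(k(1+k))
      apply le_of_mul_le_mul_right _ hP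
      push_cast
      push_cast at hmul
      calc (Nat.factorial t : ℝ) * (Nat.factorial (k+1) : ℝ) * ((t:ℝ)+(k+1)+2)^(t+2)
            * (((t:ℝ)+k+2)^(t+2) * Real.sqrt ((k:ℝ)*(1+(k:ℝ))))
          = ((Nat.factorial t : ℝ) * (Nat.factorial k : ℝ) * ((t:ℝ)+k+2)^(t+2))
            * (((k:ℝ) + 1) * ((t:ℝ) + k + 3) ^ (t+2) * Real.sqrt ((k:ℝ) * (1 + k))) := by
            rw [Nat.factorial_succ]; push_cast; ring_nf
        _ ≤ (2 * Real.sqrt (2*π*((k:ℝ)*(1+(k:ℝ)))) * (Nat.factorial (t+1+k) : ℝ) * ((t:ℝ)+1)^(t+1))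
            * (((t:ℝ) + k + 2) ^ (t+3) * Real.sqrt (((k:ℝ) + 1) * ((k:ℝ) + 2))) := hmul
        _ = (2 * (Real.sqrt (2*π*(((k:ℝ)+1)*(1+((k:ℝ)+1)))) * (Nat.factorial (t+1+(k+1)) : ℝ)) * ((t:ℝ)+1)^(t+1))
            * (((t:ℝ)+k+2)^(t+2) * Real.sqrt ((k:ℝ)*(1+(k:ℝ)))) := by
            rw [hfact]
            have hs1 : Real.sqrt (2*π*((k:ℝ)*(1+(k:ℝ))))
                = Real.sqrt (2*π) * Real.sqrt ((k:ℝ)*(1+(k:ℝ))) := by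
              rw [← Real.sqrt_mul (by positivity)]
            have hs2 : Real.sqrt (2*π*(((k:ℝ)+1)*(1+((k:ℝ)+1))))
                = Real.sqrt (2*π) * Real.sqrt (((k:ℝ)+1)*((k:ℝ)+2)) := by
              rw [← Real.sqrt_mul (by positivity)]
              congr 1
              ring
            rw [hs1, hs2, pow_succ]
            ring
        _ = (2 * Real.sqrt (2*π*(((k:ℝ)+1)*(1+((k:ℝ)+1)))) * (Nat.factorial (t+1+(k+1)) : ℝ) * ((t:ℝ)+1)^(t+1))
            * (((t:ℝ)+k+2)^(t+2) * Real.sqrt ((k:ℝ)*(1+(k:ℝ)))) := by ring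
      -- note: goal RHS after push_cast may have +(k+1) forms; handled below


lemma star (T N : ℕ) (hT : 1 ≤ T) (hN : 1 ≤ N) (s : ℝ) (hs0 : 0 ≤ s) (hsN : s ≤ (N:ℝ)) :
    Real.Gamma (T:ℝ) / Real.Gamma ((T:ℝ) + s) * (s ^ s) * Real.exp (-s) *
      ((s + (T:ℝ)) / (T:ℝ)) ^ ((T:ℝ)) ≤ 2 * Real.sqrt (1 + (N:ℝ)) := by
  obtain ⟨t, rfl⟩ : ∃ t, T = t + 1 := ⟨T - 1, (Nat.succ_pred_eq_of_pos hT).symm⟩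
  set T := t + 1 with hTdef
  have hTR : (1:ℝ) ≤ (T:ℝ) := by exact_mod_cast hT
  have hTpos : (0:ℝ) < (T:ℝ) := by linarith
  set y : ℝ := (T:ℝ) + s with hy
  have hy1 : (1:ℝ) ≤ y := by rw [hy]; linarith
  have hypos : (0:ℝ) < y := by linarith
  have hΓy : 0 < Real.Gamma y := Real.Gamma_pos_of_pos hypos
  have hΓT : Real.Gamma (T:ℝ) = (Nat.factorial t : ℝ) := by
    have := Real.Gamma_nat_eq_factorial t
    rw [hTdef]; push_cast; exact this
  have hΓTpos : 0 < Real.Gamma (T:ℝ) := Real.Gamma_pos_of_pos hTpos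
  set k := ⌊s⌋₊ with hk
  have hks : (k:ℝ) ≤ s := Nat.floor_le hs0
  have hsk1 : s < (k:ℝ) + 1 := Nat.lt_floor_add_one s
  have hkN : k ≤ N := by
    have := Nat.floor_le_floor hsN
    rwa [Nat.floor_natCast] at this
  have hsqN : Real.sqrt (1 + (k:ℝ)) ≤ Real.sqrt (1 + (N:ℝ)) := by
    apply Real.sqrt_le_sqrt
    have : (k:ℝ) ≤ N := by exact_mod_cast hkN
    linarith
  have hG := fact_le_gamma (T + k) y (by push_cast [hy]; linarith) (by push_cast [hy]; linarith)
      hypos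
  have hexp_eq : ((T + k : ℕ):ℝ) + 1 - y = (k:ℝ) + 1 - s := by push_cast [hy]; ring
  rw [hexp_eq] at hG
  -- hG : ((T+k)! : ℝ) ≤ Γ y * y ^ (k+1-s)
  have hsT : s + (T:ℝ) = y := by rw [hy]; ring
  rcases Nat.eq_zero_or_pos k with hk0 | hk1
  · -- case k = 0 : s < 1
    have hs1 : s < 1 := by rw [hk0] at hsk1; simpa using hsk1
    have hA : Real.Gamma (T:ℝ) / Real.Gamma y ≤ y / (T:ℝ) := by
      rw [div_le_div_iff₀ hΓy hTpos]
      have hG' : ((Nat.factorial T : ℕ) : ℝ) ≤ Real.Gamma y * y := by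
        rw [hk0] at hG
        simp only [Nat.add_zero] at hG
        calc ((Nat.factorial T : ℕ) : ℝ) ≤ Real.Gamma y * y ^ ((0:ℝ) + 1 - s) := by
              simpa using hG
          _ ≤ Real.Gamma y * y ^ (1:ℝ) := by
              apply mul_le_mul_of_nonneg_left _ hΓy.le
              apply Real.rpow_le_rpow_of_exponent_le hy1
              linarith
          _ = Real.Gamma y * y := by rw [Real.rpow_one]
      have hfacT : ((Nat.factorial T : ℕ) : ℝ) = (T:ℝ) * (Nat.factorial t : ℝ) := by
        rw [hTdef, Nat.factorial_succ]; push_cast; ring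
      rw [hΓT]
      calc (Nat.factorial t : ℝ) * (T:ℝ) = ((Nat.factorial T : ℕ) : ℝ) := by rw [hfacT]; ring
        _ ≤ Real.Gamma y * y := hG'
        _ = y * Real.Gamma y := by ring
    have hss1 : s ^ s ≤ 1 := Real.rpow_le_one hs0 hs1.le hs0
    have hPle : ((s + (T:ℝ)) / (T:ℝ)) ^ ((T:ℝ)) ≤ Real.exp s := by
      have hbpos : (0:ℝ) < (s + (T:ℝ)) / (T:ℝ) := by positivity
      rw [Real.rpow_def_of_pos hbpos]
      rw [Real.exp_le_exp]
      have hlog : Real.log ((s + (T:ℝ)) / (T:ℝ)) ≤ s / (T:ℝ) := by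
        have h := Real.log_le_sub_one_of_pos hbpos
        have he : (s + (T:ℝ)) / (T:ℝ) - 1 = s / (T:ℝ) := by field_simp; ring
        linarith [he.le]
      calc Real.log ((s + (T:ℝ)) / (T:ℝ)) * (T:ℝ) ≤ (s / (T:ℝ)) * (T:ℝ) :=
            mul_le_mul_of_nonneg_right hlog hTpos.le
        _ = s := by field_simp
    have hexpP : Real.exp (-s) * ((s + (T:ℝ)) / (T:ℝ)) ^ ((T:ℝ)) ≤ 1 := by
      calc Real.exp (-s) * ((s + (T:ℝ)) / (T:ℝ)) ^ ((T:ℝ))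
          ≤ Real.exp (-s) * Real.exp s := mul_le_mul_of_nonneg_left hPle (Real.exp_pos _).le
        _ = 1 := by rw [← Real.exp_add]; simp
    have hy2 : y / (T:ℝ) ≤ 2 := by
      rw [div_le_iff₀ hTpos]
      rw [hy]; linarith
    have hchain : Real.Gamma (T:ℝ) / Real.Gamma y * (s ^ s) *
        (Real.exp (-s) * ((s + (T:ℝ)) / (T:ℝ)) ^ ((T:ℝ))) ≤ (y / (T:ℝ)) * 1 * 1 := by
      have h1 : (0:ℝ) ≤ Real.Gamma (T:ℝ) / Real.Gamma y := by positivity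
      have h2 : (0:ℝ) ≤ s ^ s := Real.rpow_nonneg hs0 s
      have h3 : (0:ℝ) ≤ Real.exp (-s) * ((s + (T:ℝ)) / (T:ℝ)) ^ ((T:ℝ)) := by positivity
      have h4 : (0:ℝ) ≤ y / (T:ℝ) := by positivity
      apply mul_le_mul (mul_le_mul hA hss1 h2 h4) hexpP h3 (by positivity)
    have hsq1 : (1:ℝ) ≤ Real.sqrt (1 + (N:ℝ)) := by
      rw [Real.one_le_sqrt]
      have : (0:ℝ) ≤ (N:ℝ) := Nat.cast_nonneg N
      linarith
    calc Real.Gamma (T:ℝ) / Real.Gamma ((T:ℝ) + s) * (s ^ s) * Real.exp (-s) *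
          ((s + (T:ℝ)) / (T:ℝ)) ^ ((T:ℝ))
        = Real.Gamma (T:ℝ) / Real.Gamma y * (s ^ s) *
          (Real.exp (-s) * ((s + (T:ℝ)) / (T:ℝ)) ^ ((T:ℝ))) := by rw [← hy]; ring
      _ ≤ (y / (T:ℝ)) * 1 * 1 := hchain
      _ = y / (T:ℝ) := by ring
      _ ≤ 2 := hy2
      _ ≤ 2 * Real.sqrt (1 + (N:ℝ)) := by linarith [hsq1]
  · -- case k ≥ 1
    have hkR : (1:ℝ) ≤ (k:ℝ) := by exact_mod_cast hk1
    have hkpos : (0:ℝ) < (k:ℝ) := by linarith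
    have hfactTk : (0:ℝ) < (Nat.factorial (T+k) : ℝ) := by exact_mod_cast Nat.factorial_pos _
    have hsq2πk : (0:ℝ) < Real.sqrt (2*π*(k:ℝ)) := Real.sqrt_pos.mpr (by positivity)
    have hA : Real.Gamma (T:ℝ) / Real.Gamma y
        ≤ ((Nat.factorial t : ℝ) * y ^ ((k:ℝ)+1-s)) / (Nat.factorial (T+k) : ℝ) := by
      rw [div_le_div_iff₀ hΓy hfactTk, hΓT]
      calc (Nat.factorial t : ℝ) * (Nat.factorial (T+k) : ℝ)
          ≤ (Nat.factorial t : ℝ) * (Real.Gamma y * y ^ ((k:ℝ)+1-s)) :=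
            mul_le_mul_of_nonneg_left hG (by positivity)
        _ = (Nat.factorial t : ℝ) * y ^ ((k:ℝ)+1-s) * Real.Gamma y := by ring
    have hB : s ^ s * Real.exp (-s)
        ≤ ((Nat.factorial k : ℝ) / Real.sqrt (2*π*(k:ℝ))) * y ^ (s-(k:ℝ)) := by
      have h1 := sps_le k hk1 s hks
      have h2 : (k:ℝ)^k * Real.exp (-(k:ℝ)) ≤ (Nat.factorial k : ℝ) / Real.sqrt (2*π*(k:ℝ)) := by
        rw [le_div_iff₀ hsq2πk]
        have hpe : ((k:ℝ)/Real.exp 1)^k = (k:ℝ)^k * Real.exp (-(k:ℝ)) := by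
          rw [div_pow, Real.exp_one_pow, Real.exp_neg]
          ring
        calc (k:ℝ)^k * Real.exp (-(k:ℝ)) * Real.sqrt (2*π*(k:ℝ))
            = Real.sqrt (2*π*(k:ℝ)) * ((k:ℝ)/Real.exp 1)^k := by rw [hpe]; ring
          _ ≤ (Nat.factorial k : ℝ) := fact_lower k hk1
      have h3 : s^(s-(k:ℝ)) ≤ y^(s-(k:ℝ)) :=
        Real.rpow_le_rpow hs0 (by rw [hy]; linarith) (by linarith)
      calc s ^ s * Real.exp (-s) ≤ (k:ℝ)^k * Real.exp (-(k:ℝ)) * s^(s-(k:ℝ)) := h1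
        _ ≤ ((Nat.factorial k : ℝ) / Real.sqrt (2*π*(k:ℝ))) * y^(s-(k:ℝ)) :=
            mul_le_mul h2 h3 (Real.rpow_nonneg hs0 _) (by positivity)
    have hP : ((s+(T:ℝ))/(T:ℝ)) ^ ((T:ℝ)) = y^(T:ℕ) / ((T:ℝ))^(T:ℕ) := by
      rw [hsT, Real.div_rpow hypos.le hTpos.le, Real.rpow_natCast, Real.rpow_natCast]
    have ycomb : y^((k:ℝ)+1-s) * y^(s-(k:ℝ)) * y^(T:ℕ) = y^(T+1) := by
      rw [← Real.rpow_add hypos, show (k:ℝ)+1-s+(s-(k:ℝ)) = 1 by ring, Real.rpow_one]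
      exact (pow_succ' y T).symm
    have hyb : y ≤ (T:ℝ) + (k:ℝ) + 1 := by rw [hy]; linarith
    have hyT1 : y^(T+1) ≤ ((T:ℝ)+(k:ℝ)+1)^(T+1) := pow_le_pow_left₀ hypos.le hyb (T+1)
    have hD := lemD t k hk1
    have hD' : (Nat.factorial t : ℝ) * (Nat.factorial k : ℝ) * ((T:ℝ)+(k:ℝ)+1)^(T+1)
        ≤ 2 * Real.sqrt (2*π*((k:ℝ)*(1+(k:ℝ)))) * (Nat.factorial (T+k) : ℝ) * ((T:ℝ))^(T:ℕ) := by
      have e1 : (t:ℝ)+(k:ℝ)+2 = (T:ℝ)+(k:ℝ)+1 := by rw [hTdef]; push_cast; ring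
      have e2 : t+2 = T+1 := by rw [hTdef]
      have e3 : t+1+k = T+k := by rw [hTdef]
      have e4 : (t:ℝ)+1 = (T:ℝ) := by rw [hTdef]; push_cast; ring
      have e5 : t+1 = T := by rw [hTdef]
      rw [e1, e2, e3, e4, e5] at hD
      exact hD
    have hsplit : Real.sqrt (2*π*((k:ℝ)*(1+(k:ℝ))))
        = Real.sqrt (2*π*(k:ℝ)) * Real.sqrt (1+(k:ℝ)) := by
      rw [show 2*π*((k:ℝ)*(1+(k:ℝ))) = (2*π*(k:ℝ))*(1+(k:ℝ)) by ring,
          Real.sqrt_mul (by positivity)]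
    have hfinal : ((Nat.factorial t : ℝ) * (Nat.factorial k : ℝ) * y^(T+1))
        / ((Nat.factorial (T+k) : ℝ) * Real.sqrt (2*π*(k:ℝ)) * ((T:ℝ))^(T:ℕ))
        ≤ 2 * Real.sqrt (1+(k:ℝ)) := by
      rw [div_le_iff₀ (by positivity)]
      calc (Nat.factorial t : ℝ) * (Nat.factorial k : ℝ) * y^(T+1)
          ≤ (Nat.factorial t : ℝ) * (Nat.factorial k : ℝ) * ((T:ℝ)+(k:ℝ)+1)^(T+1) := by
            apply mul_le_mul_of_nonneg_left hyT1 (by positivity)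
        _ ≤ 2 * Real.sqrt (2*π*((k:ℝ)*(1+(k:ℝ)))) * (Nat.factorial (T+k) : ℝ) * ((T:ℝ))^(T:ℕ) := hD'
        _ = 2 * Real.sqrt (1+(k:ℝ)) *
            ((Nat.factorial (T+k) : ℝ) * Real.sqrt (2*π*(k:ℝ)) * ((T:ℝ))^(T:ℕ)) := by
            rw [hsplit]; ring
    have hnn1 : (0:ℝ) ≤ ((Nat.factorial t : ℝ) * y ^ ((k:ℝ)+1-s)) / (Nat.factorial (T+k) : ℝ) := by
      positivity
    have hnn2 : (0:ℝ) ≤ ((Nat.factorial k : ℝ) / Real.sqrt (2*π*(k:ℝ))) * y ^ (s-(k:ℝ)) := by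
      positivity
    have hnn3 : (0:ℝ) ≤ y^(T:ℕ) / ((T:ℝ))^(T:ℕ) := by positivity
    have hnn4 : (0:ℝ) ≤ s ^ s * Real.exp (-s) := by
      have := Real.rpow_nonneg hs0 s
      positivity
    calc Real.Gamma (T:ℝ) / Real.Gamma ((T:ℝ) + s) * (s ^ s) * Real.exp (-s) *
          ((s + (T:ℝ)) / (T:ℝ)) ^ ((T:ℝ))
        = (Real.Gamma (T:ℝ) / Real.Gamma y) * (s ^ s * Real.exp (-s)) *
          (y^(T:ℕ) / ((T:ℝ))^(T:ℕ)) := by rw [← hy, hP]; ring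
      _ ≤ (((Nat.factorial t : ℝ) * y ^ ((k:ℝ)+1-s)) / (Nat.factorial (T+k) : ℝ)) *
          (((Nat.factorial k : ℝ) / Real.sqrt (2*π*(k:ℝ))) * y ^ (s-(k:ℝ))) *
          (y^(T:ℕ) / ((T:ℝ))^(T:ℕ)) := by
          apply mul_le_mul (mul_le_mul hA hB hnn4 hnn1) le_rfl hnn3 (by positivity)
      _ = ((Nat.factorial t : ℝ) * (Nat.factorial k : ℝ) *
            (y^((k:ℝ)+1-s) * y^(s-(k:ℝ)) * y^(T:ℕ)))
          / ((Nat.factorial (T+k) : ℝ) * Real.sqrt (2*π*(k:ℝ)) * ((T:ℝ))^(T:ℕ)) := by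
          ring
      _ = ((Nat.factorial t : ℝ) * (Nat.factorial k : ℝ) * y^(T+1))
          / ((Nat.factorial (T+k) : ℝ) * Real.sqrt (2*π*(k:ℝ)) * ((T:ℝ))^(T:ℕ)) := by
          rw [ycomb]
      _ ≤ 2 * Real.sqrt (1+(k:ℝ)) := hfinal
      _ ≤ 2 * Real.sqrt (1 + (N:ℝ)) := by linarith [hsqN]


/-- For positive integers `T, N, M` with `M ≥ 2T`, `ξ = N/M`, `ω = e·√(3/(7π))`, and any
real `0 ≤ s ≤ N`, it holds that
`(ω√(2π))^T · (M/(M−T))^s · (Γ(T)/Γ(T+s)) · s^s · e^{−s} · ((s+T)/T)^{T/2}`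
`≤ 2·√(1+N) · e^{(1+2ξ)T} · (T/(T+s))^{T/2}`,
with the convention `s^s = 1` when `s = 0` (which is `Real.rpow`'s convention). -/
theorem A_le_B_bound
    (T N M : ℕ) (hT : 0 < T) (hN : 0 < N) (hM : 0 < M) (hMT : 2 * T ≤ M)
    (s : ℝ) (hs0 : 0 ≤ s) (hsN : s ≤ (N : ℝ)) :
    (Real.exp 1 * Real.sqrt (3 / (7 * Real.pi)) * Real.sqrt (2 * Real.pi)) ^ (T : ℝ) *
        ((M : ℝ) / ((M : ℝ) - (T : ℝ))) ^ s *
        (Real.Gamma (T : ℝ) / Real.Gamma ((T : ℝ) + s)) *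
        s ^ s * Real.exp (-s) *
        ((s + (T : ℝ)) / (T : ℝ)) ^ ((T : ℝ) / 2)
      ≤ 2 * Real.sqrt (1 + (N : ℝ)) *
          Real.exp ((1 + 2 * ((N : ℝ) / (M : ℝ))) * (T : ℝ)) *
          ((T : ℝ) / ((T : ℝ) + s)) ^ ((T : ℝ) / 2) := by
  have hTR : (1:ℝ) ≤ (T:ℝ) := by exact_mod_cast hT
  have hTpos : (0:ℝ) < (T:ℝ) := by linarith
  have hMR : (0:ℝ) < (M:ℝ) := by exact_mod_cast hM
  have hMT' : 2*(T:ℝ) ≤ (M:ℝ) := by exact_mod_cast hMT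
  have hMTpos : (0:ℝ) < (M:ℝ) - (T:ℝ) := by linarith
  have hTspos : (0:ℝ) < (T:ℝ) + s := by linarith
  have hbase1 : Real.exp 1 * Real.sqrt (3/(7*π)) * Real.sqrt (2*π) ≤ Real.exp 1 := by
    have h1 : Real.sqrt (3/(7*π)) * Real.sqrt (2*π) = Real.sqrt ((3/(7*π))*(2*π)) :=
      (Real.sqrt_mul (by positivity) _).symm
    have h2 : (3/(7*π))*(2*π) = 6/7 := by
      have hπ : π ≠ 0 := Real.pi_ne_zero
      field_simp
      ring
    have h3 : Real.sqrt ((3/(7*π))*(2*π)) ≤ 1 := by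
      rw [h2, show (1:ℝ) = Real.sqrt 1 from (Real.sqrt_one).symm]
      exact Real.sqrt_le_sqrt (by norm_num)
    calc Real.exp 1 * Real.sqrt (3/(7*π)) * Real.sqrt (2*π)
        = Real.exp 1 * (Real.sqrt (3/(7*π)) * Real.sqrt (2*π)) := by ring
      _ ≤ Real.exp 1 * 1 := mul_le_mul_of_nonneg_left (h1 ▸ h3) (Real.exp_pos 1).le
      _ = Real.exp 1 := mul_one _
  have hF1 : (Real.exp 1 * Real.sqrt (3/(7*π)) * Real.sqrt (2*π))^((T:ℝ)) ≤ Real.exp (T:ℝ) := by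
    calc (Real.exp 1 * Real.sqrt (3/(7*π)) * Real.sqrt (2*π))^((T:ℝ))
        ≤ (Real.exp 1)^((T:ℝ)) := Real.rpow_le_rpow (by positivity) hbase1 (by positivity)
      _ = Real.exp (T:ℝ) := Real.exp_one_rpow _
  have hF2 : ((M:ℝ)/((M:ℝ)-(T:ℝ)))^s ≤ Real.exp (2*((N:ℝ)/(M:ℝ))*(T:ℝ)) := by
    have hb : (0:ℝ) < (M:ℝ)/((M:ℝ)-(T:ℝ)) := by positivity
    rw [Real.rpow_def_of_pos hb, Real.exp_le_exp]
    have hlog : Real.log ((M:ℝ)/((M:ℝ)-(T:ℝ))) ≤ 2*(T:ℝ)/(M:ℝ) := by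
      have h := Real.log_le_sub_one_of_pos hb
      have he : (M:ℝ)/((M:ℝ)-(T:ℝ)) - 1 = (T:ℝ)/((M:ℝ)-(T:ℝ)) := by field_simp; ring
      have h2 : (T:ℝ)/((M:ℝ)-(T:ℝ)) ≤ 2*(T:ℝ)/(M:ℝ) := by
        rw [div_le_div_iff₀ hMTpos hMR]
        nlinarith
      linarith [he.le]
    calc Real.log ((M:ℝ)/((M:ℝ)-(T:ℝ))) * s ≤ (2*(T:ℝ)/(M:ℝ)) * s := by
          apply mul_le_mul_of_nonneg_right hlog hs0
      _ ≤ (2*(T:ℝ)/(M:ℝ)) * (N:ℝ) := by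
          apply mul_le_mul_of_nonneg_left hsN (by positivity)
      _ = 2*((N:ℝ)/(M:ℝ))*(T:ℝ) := by field_simp
  have hstar := star T N hT hN s hs0 hsN
  have hbP : (0:ℝ) < (s + (T:ℝ))/(T:ℝ) := by positivity
  have hP2pos : (0:ℝ) < ((s + (T:ℝ))/(T:ℝ))^((T:ℝ)/2) := Real.rpow_pos_of_pos hbP _
  apply le_of_mul_le_mul_right _ hP2pos
  have hQP : ((T:ℝ)/((T:ℝ)+s))^((T:ℝ)/2) * ((s+(T:ℝ))/(T:ℝ))^((T:ℝ)/2) = 1 := by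
    rw [← Real.mul_rpow (by positivity) (by positivity),
        show ((T:ℝ)/((T:ℝ)+s)) * ((s+(T:ℝ))/(T:ℝ)) = 1 by field_simp; ring]
    exact Real.one_rpow _
  have hPP : ((s+(T:ℝ))/(T:ℝ))^((T:ℝ)/2) * ((s+(T:ℝ))/(T:ℝ))^((T:ℝ)/2)
      = ((s+(T:ℝ))/(T:ℝ))^((T:ℝ)) := by
    rw [← Real.rpow_add hbP]
    norm_num
  have hE : Real.exp ((1 + 2*((N:ℝ)/(M:ℝ)))*(T:ℝ))
      = Real.exp (T:ℝ) * Real.exp (2*((N:ℝ)/(M:ℝ))*(T:ℝ)) := by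
    rw [← Real.exp_add]
    ring_nf
  have hnnF1 : (0:ℝ) ≤ (Real.exp 1 * Real.sqrt (3/(7*π)) * Real.sqrt (2*π))^((T:ℝ)) := by
    positivity
  have hnnF2 : (0:ℝ) ≤ ((M:ℝ)/((M:ℝ)-(T:ℝ)))^s := by positivity
  have hnnS : (0:ℝ) ≤ Real.Gamma (T:ℝ) / Real.Gamma ((T:ℝ) + s) * (s ^ s) * Real.exp (-s) *
      ((s + (T:ℝ)) / (T:ℝ)) ^ ((T:ℝ)) := by
    have h1 : 0 < Real.Gamma (T:ℝ) := Real.Gamma_pos_of_pos hTpos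
    have h2 : 0 < Real.Gamma ((T:ℝ) + s) := Real.Gamma_pos_of_pos hTspos
    have h3 : (0:ℝ) ≤ s ^ s := Real.rpow_nonneg hs0 s
    positivity
  calc (Real.exp 1 * Real.sqrt (3 / (7 * π)) * Real.sqrt (2 * π)) ^ (T : ℝ) *
        ((M : ℝ) / ((M : ℝ) - (T : ℝ))) ^ s *
        (Real.Gamma (T : ℝ) / Real.Gamma ((T : ℝ) + s)) *
        s ^ s * Real.exp (-s) *
        ((s + (T : ℝ)) / (T : ℝ)) ^ ((T : ℝ) / 2) * ((s + (T:ℝ))/(T:ℝ))^((T:ℝ)/2)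
      = (Real.exp 1 * Real.sqrt (3 / (7 * π)) * Real.sqrt (2 * π)) ^ (T : ℝ) *
        (((M : ℝ) / ((M : ℝ) - (T : ℝ))) ^ s) *
        (Real.Gamma (T : ℝ) / Real.Gamma ((T : ℝ) + s) * (s ^ s) * Real.exp (-s) *
          (((s + (T:ℝ))/(T:ℝ))^((T:ℝ)/2) * ((s + (T:ℝ))/(T:ℝ))^((T:ℝ)/2))) := by ring
    _ = (Real.exp 1 * Real.sqrt (3 / (7 * π)) * Real.sqrt (2 * π)) ^ (T : ℝ) *
        (((M : ℝ) / ((M : ℝ) - (T : ℝ))) ^ s) *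
        (Real.Gamma (T : ℝ) / Real.Gamma ((T : ℝ) + s) * (s ^ s) * Real.exp (-s) *
          ((s + (T:ℝ))/(T:ℝ))^((T:ℝ))) := by rw [hPP]
    _ ≤ Real.exp (T:ℝ) * Real.exp (2*((N:ℝ)/(M:ℝ))*(T:ℝ)) * (2 * Real.sqrt (1 + (N:ℝ))) := by
        apply mul_le_mul (mul_le_mul hF1 hF2 hnnF2 (Real.exp_pos _).le) hstar hnnS
          (by positivity)
    _ = 2 * Real.sqrt (1 + (N:ℝ)) *
          (Real.exp (T:ℝ) * Real.exp (2*((N:ℝ)/(M:ℝ))*(T:ℝ))) *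
          (((T:ℝ)/((T:ℝ)+s))^((T:ℝ)/2) * ((s+(T:ℝ))/(T:ℝ))^((T:ℝ)/2)) := by
        rw [hQP]
        ring
    _ = 2 * Real.sqrt (1 + (N : ℝ)) *
          Real.exp ((1 + 2 * ((N : ℝ) / (M : ℝ))) * (T : ℝ)) *
          ((T : ℝ) / ((T : ℝ) + s)) ^ ((T : ℝ) / 2) * ((s + (T:ℝ))/(T:ℝ))^((T:ℝ)/2) := by
        rw [hE]
        ring
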